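/- Let S(V) be a coalgebra that is a polynomial (symmetric) coalgebra on V with the unshuffle coproduct, equipped with an associative product ∗ with unit 1 ∈ S^0(V) making it a bialgebra, such that S^n(V) ∗ S^m(V) ⊆ ⊕_{i ≥ 2} S^i(V) for all n ≥ 2. Let π: V ⊗ V → V be the component of ∗ restricted to V ⊗ V landing in V. Then π satisfies the pre-Lie identity: π(π(a⊗b)⊗c) − π(a⊗π(b⊗c)) = π(π(a⊗c)⊗b) − π(a⊗π(c⊗b)) for all a,b,c ∈ V. -/

import Mathlib

open TensorProduct MvPolynomial

/-- The unshuffle coproduct on the polynomial (symmetric) coalgebra `S(V) = K[X_i]`: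
the algebra map (for the polynomial product) determined by making each variable primitive. -/
noncomputable def unshuffle (K : Type*) (σ : Type*) [CommRing K] :
    MvPolynomial σ K →ₐ[K] MvPolynomial σ K ⊗[K] MvPolynomial σ K :=
  MvPolynomial.aeval (fun i : σ =>
    (X i ⊗ₜ[K] 1 + 1 ⊗ₜ[K] X i : MvPolynomial σ K ⊗[K] MvPolynomial σ K))

/-- The counit of the polynomial coalgebra: the projection on `S^0(V) = K`. -/
noncomputable def polyCounit (K : Type*) (σ : Type*) [CommRing K] :
    MvPolynomial σ K →ₐ[K] K :=
  MvPolynomial.aeval (fun _ : σ => (0 : K))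

section Aux

variable {K σ : Type*} [CommRing K]

lemma Finsupp.degree_eq_one_iff {d : σ →₀ ℕ} (h : d.degree = 1) :
    ∃ i, d = Finsupp.single i 1 := by
  classical
  have hne : d.support.Nonempty := by
    rcases Finset.eq_empty_or_nonempty d.support with he | hne
    · exfalso
      have : d = 0 := Finsupp.support_eq_empty.mp he
      rw [this, map_zero] at h
      exact one_ne_zero h.symm
    · exact hne
  obtain ⟨i, hi⟩ := hne
  have hle : d i ≤ d.degree := by
    unfold Finsupp.degree
    exact Finset.single_le_sum (fun j _ => Nat.zero_le _) hi
  have hge : 1 ≤ d i := Nat.one_le_iff_ne_zero.mpr (Finsupp.mem_support_iff.mp hi)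
  have hdi : d i = 1 := le_antisymm (h ▸ hle) hge
  refine ⟨i, Finsupp.ext fun j => ?_⟩
  by_cases hj : j = i
  · subst hj; simp [hdi]
  · rw [Finsupp.single_apply, if_neg (Ne.symm hj)]
    by_contra hj0
    have hjmem : j ∈ d.support := Finsupp.mem_support_iff.mpr hj0
    have : d i + ∑ k ∈ d.support.erase i, d k = 1 := by
      rw [Finset.add_sum_erase _ _ hi]; exact h
    rw [hdi] at this
    have hrest : ∑ k ∈ d.support.erase i, d k = 0 := by omega
    have : d j = 0 := by
      have hjm : j ∈ d.support.erase i := Finset.mem_erase.mpr ⟨hj, hjmem⟩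
      exact (Finset.sum_eq_zero_iff.mp hrest) j hjm
    exact hj0 this

end Aux

section Aux2

variable {K σ : Type*} [CommRing K]

lemma unshuffle_deg_one {b : MvPolynomial σ K} (hb : b ∈ homogeneousSubmodule σ K 1) :
    unshuffle K σ b = b ⊗ₜ[K] 1 + 1 ⊗ₜ[K] b := by
  conv_lhs => rw [b.as_sum]
  conv_rhs => rw [b.as_sum]
  rw [map_sum, TensorProduct.sum_tmul, TensorProduct.tmul_sum, ← Finset.sum_add_distrib]
  refine Finset.sum_congr rfl fun d hd => ?_
  have hdeg : d.degree = 1 := by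
    rw [Finsupp.degree_eq_weight_one]
    exact (mem_homogeneousSubmodule 1 b).mp hb (MvPolynomial.mem_support_iff.mp hd)
  obtain ⟨i, rfl⟩ := Finsupp.degree_eq_one_iff hdeg
  have hX : (monomial (Finsupp.single i 1)) (coeff (Finsupp.single i 1) b)
      = coeff (Finsupp.single i 1) b • (X i : MvPolynomial σ K) := by
    have hXi : (X i : MvPolynomial σ K) = monomial (Finsupp.single i 1) 1 := rfl
    rw [hXi, smul_monomial, smul_eq_mul, mul_one]
  rw [hX, map_smul, TensorProduct.tmul_smul, ← TensorProduct.smul_tmul', ← smul_add]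
  congr 1
  show aeval _ (X i) = _
  rw [aeval_X]

lemma aeval_smul_X_monomial (c : K) (d : σ →₀ ℕ) (a : K) :
    aeval (fun i => c • (X i : MvPolynomial σ K)) (monomial d a)
      = c ^ d.degree • monomial d a := by
  rw [aeval_monomial]
  have h1 : (d.prod fun i k => (c • (X i : MvPolynomial σ K)) ^ k)
      = C (c ^ d.degree) * d.prod fun i k => (X i : MvPolynomial σ K) ^ k := by
    unfold Finsupp.prod
    calc ∏ i ∈ d.support, (c • (X i : MvPolynomial σ K)) ^ d i
        = ∏ i ∈ d.support, (C (c ^ d i) * (X i : MvPolynomial σ K) ^ d i) := by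
          refine Finset.prod_congr rfl fun i _ => ?_
          rw [smul_pow, smul_eq_C_mul]
      _ = (∏ i ∈ d.support, C (c ^ d i)) * ∏ i ∈ d.support, (X i : MvPolynomial σ K) ^ d i :=
          Finset.prod_mul_distrib
      _ = C (c ^ d.degree) * ∏ i ∈ d.support, (X i : MvPolynomial σ K) ^ d i := by
          rw [← map_prod, Finset.prod_pow_eq_pow_sum]
          rfl
  rw [h1, smul_eq_C_mul, monomial_eq, algebraMap_eq]
  unfold Finsupp.prod
  ring

lemma coeff_aeval_smul_X (c : K) (p : MvPolynomial σ K) (d : σ →₀ ℕ) :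
    coeff d (aeval (fun i => c • (X i : MvPolynomial σ K)) p)
      = c ^ d.degree * coeff d p := by
  induction p using MvPolynomial.induction_on' with
  | monomial d' a =>
    rw [aeval_smul_X_monomial]
    classical
    rw [coeff_smul, coeff_monomial, smul_eq_mul]
    by_cases h : d' = d
    · subst h; rfl
    · simp [h]
  | add p q hp hq => rw [map_add, coeff_add, coeff_add, hp, hq, mul_add]

lemma lmul'_unshuffle (p : MvPolynomial σ K) :
    Algebra.TensorProduct.lmul' K (unshuffle K σ p)
      = aeval (fun i => (2 : K) • (X i : MvPolynomial σ K)) p := by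
  have h : (Algebra.TensorProduct.lmul' (S := MvPolynomial σ K) K).comp (unshuffle K σ)
      = aeval (fun i => (2 : K) • (X i : MvPolynomial σ K)) := by
    apply MvPolynomial.algHom_ext
    intro i
    rw [AlgHom.comp_apply]
    show Algebra.TensorProduct.lmul' K (aeval _ (X i)) = _
    rw [aeval_X, aeval_X, map_add, Algebra.TensorProduct.lmul'_apply_tmul,
      Algebra.TensorProduct.lmul'_apply_tmul, mul_one, one_mul, two_smul]
  exact congrArg (fun f => f p) (congrArg DFunLike.coe h)

end Aux2

section Aux3

variable {K σ : Type*} [Field K] [CharZero K]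

lemma primitive_is_linear {x : MvPolynomial σ K}
    (hx : unshuffle K σ x = x ⊗ₜ[K] 1 + 1 ⊗ₜ[K] x) :
    homogeneousComponent 1 x = x := by
  have key : aeval (fun i => (2 : K) • (X i : MvPolynomial σ K)) x = x + x := by
    rw [← lmul'_unshuffle, hx, map_add, Algebra.TensorProduct.lmul'_apply_tmul,
      Algebra.TensorProduct.lmul'_apply_tmul, mul_one, one_mul]
  ext d
  rw [coeff_homogeneousComponent]
  by_cases h : d.degree = 1
  · rw [if_pos h]
  · rw [if_neg h]
    have hc := congrArg (coeff d) key
    rw [coeff_aeval_smul_X, coeff_add] at hc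
    have h2 : ((2 : K) ^ d.degree - 2) * coeff d x = 0 := by ring_nf; linear_combination hc
    rcases mul_eq_zero.mp h2 with h3 | h3
    · exfalso
      apply h
      have h4 : (2 : K) ^ d.degree = 2 := sub_eq_zero.mp h3
      have h5 : ((2 ^ d.degree : ℕ) : K) = ((2 ^ 1 : ℕ) : K) := by push_cast; simpa using h4
      have h6 : (2 : ℕ) ^ d.degree = 2 ^ 1 := Nat.cast_injective h5
      exact Nat.pow_right_injective (le_refl 2) h6
    · exact h3.symm

end Aux3

lemma polyCounit_eq_coeff_zero {K σ : Type*} [CommRing K] (p : MvPolynomial σ K) :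
    polyCounit K σ p = coeff 0 p := by
  classical
  induction p using MvPolynomial.induction_on with
  | C a => show aeval _ (C a) = _; rw [aeval_C, coeff_zero_C]; rfl
  | add p q hp hq => rw [map_add, coeff_add, hp, hq]
  | mul_X p i hp =>
    rw [map_mul]
    show polyCounit K σ p * aeval _ (X i) = _
    rw [aeval_X, mul_zero, coeff_mul_X']
    simp

/-- Let `S(V)` (realized as the symmetric coalgebra `K[X_i]` with the unshuffle coproduct,
`V` being the degree-one part) be equipped with an associative unital product `∗ = m` making
it a bialgebra, which is right-handed: `Sⁿ(V) ∗ Sᵐ(V) ⊆ ⊕_{i ≥ 2} Sⁱ(V)` for `n ≥ 2`.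
Then the component `π : V ⊗ V → V` of `∗` (here `π(a⊗b)` is the degree-one homogeneous
component of `m a b`) satisfies the pre-Lie identity. -/
theorem rightHanded_gives_preLie {K σ : Type*} [Field K] [CharZero K]
    (m : MvPolynomial σ K →ₗ[K] MvPolynomial σ K →ₗ[K] MvPolynomial σ K)
    (hone : ∀ x : MvPolynomial σ K, m 1 x = x ∧ m x 1 = x)
    (hassoc : ∀ x y z : MvPolynomial σ K, m (m x y) z = m x (m y z))
    (hcomul : ∀ x y : MvPolynomial σ K,
      unshuffle K σ (m x y) =
        TensorProduct.map (TensorProduct.lift m) (TensorProduct.lift m)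
          (TensorProduct.tensorTensorTensorComm K (MvPolynomial σ K) (MvPolynomial σ K)
              (MvPolynomial σ K) (MvPolynomial σ K)
            (unshuffle K σ x ⊗ₜ[K] unshuffle K σ y)))
    (hcounit : ∀ x y : MvPolynomial σ K,
      polyCounit K σ (m x y) = polyCounit K σ x * polyCounit K σ y)
    (hrh : ∀ (n k : ℕ) (x y : MvPolynomial σ K), 2 ≤ n →
      x ∈ homogeneousSubmodule σ K n → y ∈ homogeneousSubmodule σ K k →
      homogeneousComponent 0 (m x y) = 0 ∧ homogeneousComponent 1 (m x y) = 0) :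
    ∀ a b c : MvPolynomial σ K,
      a ∈ homogeneousSubmodule σ K 1 → b ∈ homogeneousSubmodule σ K 1 →
      c ∈ homogeneousSubmodule σ K 1 →
      homogeneousComponent 1 (m (homogeneousComponent 1 (m a b)) c) -
          homogeneousComponent 1 (m a (homogeneousComponent 1 (m b c))) =
        homogeneousComponent 1 (m (homogeneousComponent 1 (m a c)) b) -
          homogeneousComponent 1 (m a (homogeneousComponent 1 (m c b))) := by
  have hml : ∀ x : MvPolynomial σ K, m 1 x = x := fun x => (hone x).1
  have hmr : ∀ x : MvPolynomial σ K, m x 1 = x := fun x => (hone x).2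
  have hco : ∀ x : MvPolynomial σ K, x ∈ homogeneousSubmodule σ K 1 → coeff 0 x = 0 := by
    intro x hx
    by_contra h0
    have h1 := (mem_homogeneousSubmodule 1 x).mp hx h0
    simp at h1
  have hH0 : ∀ x y : MvPolynomial σ K, x ∈ homogeneousSubmodule σ K 1 →
      y ∈ homogeneousSubmodule σ K 1 → homogeneousComponent 0 (m x y) = 0 := by
    intro x y hx hy
    rw [homogeneousComponent_zero, ← polyCounit_eq_coeff_zero, hcounit,
      polyCounit_eq_coeff_zero, polyCounit_eq_coeff_zero, hco x hx, zero_mul, map_zero]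
  have hkill : ∀ y z : MvPolynomial σ K, z ∈ homogeneousSubmodule σ K 1 →
      homogeneousComponent 0 y = 0 → homogeneousComponent 1 y = 0 →
      homogeneousComponent 1 (m y z) = 0 := by
    intro y z hz h0 h1
    conv_lhs => rw [← sum_homogeneousComponent y]
    rw [map_sum, LinearMap.sum_apply, map_sum]
    refine Finset.sum_eq_zero fun i _ => ?_
    match i with
    | 0 => rw [h0, map_zero, LinearMap.zero_apply, map_zero]
    | 1 => rw [h1, map_zero, LinearMap.zero_apply, map_zero]
    | (n + 2) =>
      exact (hrh (n + 2) 1 _ z (by omega) (homogeneousComponent_mem (n + 2) y) hz).2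
  have hfirst : ∀ x y z : MvPolynomial σ K, x ∈ homogeneousSubmodule σ K 1 →
      y ∈ homogeneousSubmodule σ K 1 → z ∈ homogeneousSubmodule σ K 1 →
      homogeneousComponent 1 (m (homogeneousComponent 1 (m x y)) z)
        = homogeneousComponent 1 (m (m x y) z) := by
    intro x y z hx hy hz
    have e0 : homogeneousComponent 0 (m x y - homogeneousComponent 1 (m x y)) = 0 := by
      rw [map_sub, hH0 x y hx hy,
        homogeneousComponent_of_mem (homogeneousComponent_mem 1 (m x y))]
      simp
    have e1 : homogeneousComponent 1 (m x y - homogeneousComponent 1 (m x y)) = 0 := by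
      rw [map_sub,
        homogeneousComponent_of_mem (homogeneousComponent_mem 1 (m x y)), if_pos rfl, sub_self]
    have h := hkill _ z hz e0 e1
    rw [map_sub, LinearMap.sub_apply, map_sub, sub_eq_zero] at h
    exact h.symm
  have hcom : ∀ y z : MvPolynomial σ K, y ∈ homogeneousSubmodule σ K 1 →
      z ∈ homogeneousSubmodule σ K 1 →
      unshuffle K σ (m y z)
        = (m y z) ⊗ₜ[K] 1 + 1 ⊗ₜ[K] (m y z) + y ⊗ₜ[K] z + z ⊗ₜ[K] y := by
    intro y z hy hz
    rw [hcomul, unshuffle_deg_one hy, unshuffle_deg_one hz]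
    simp only [TensorProduct.tmul_add, TensorProduct.add_tmul, LinearEquiv.map_add,
      LinearMap.map_add, TensorProduct.tensorTensorTensorComm_tmul, TensorProduct.map_tmul,
      TensorProduct.lift.tmul, hml, hmr]
    abel
  have hQ : ∀ y z : MvPolynomial σ K, y ∈ homogeneousSubmodule σ K 1 →
      z ∈ homogeneousSubmodule σ K 1 →
      m y z - homogeneousComponent 1 (m y z) = m z y - homogeneousComponent 1 (m z y) := by
    intro y z hy hz
    have hprim : unshuffle K σ (m y z - m z y)
        = (m y z - m z y) ⊗ₜ[K] 1 + 1 ⊗ₜ[K] (m y z - m z y) := by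
      rw [map_sub, hcom y z hy hz, hcom z y hz hy, TensorProduct.sub_tmul,
        TensorProduct.tmul_sub]
      abel
    have hlin := primitive_is_linear hprim
    rw [map_sub] at hlin
    linear_combination -hlin
  intro a b c ha hb hc
  rw [hfirst a b c ha hb hc, hfirst a c b ha hc hb, hassoc, hassoc]
  have key : ∀ y z : MvPolynomial σ K,
      homogeneousComponent 1 (m a (m y z))
          - homogeneousComponent 1 (m a (homogeneousComponent 1 (m y z)))
        = homogeneousComponent 1 (m a (m y z - homogeneousComponent 1 (m y z))) := by
    intro y z
    rw [map_sub (m a), map_sub]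
  rw [key, key, hQ b c hb hc]
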